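/- Let η ∈ (0, π/2) and let a, b ∈ [η, π) with a + b ≤ π. Let x ∈ ℝ be such that a + x/2 ∈ [η, π) and b − x/2 ∈ [η, π). Then |log(sin(a + x/2)) − log(sin(b − x/2)) − log(sin a) + log(sin b)| ≤ |x|/(2·sin²η). -/

import Mathlib

open Real

lemma sin_eta_le_sin_aux (η θ : ℝ) (hη0 : 0 < η) (hη2 : η ≤ π / 2)
    (h1 : η ≤ θ) (h2 : θ ≤ π - η) : Real.sin η ≤ Real.sin θ := by
  rcases le_total θ (π / 2) with h | h
  · exact Real.sin_le_sin_of_le_of_le_pi_div_two (by linarith) h h1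
  · rw [← Real.sin_pi_sub θ]
    exact Real.sin_le_sin_of_le_of_le_pi_div_two (by linarith) (by linarith) (by linarith)

/-- Lipschitz bound for the change of the logarithmic length-ratio of a kite under a
deformation `x` of the central angles. -/
theorem log_ratio_change_bound (η : ℝ) (hη : η ∈ Set.Ioo 0 (π / 2)) (a b : ℝ)
    (ha : a ∈ Set.Ico η π) (hb : b ∈ Set.Ico η π) (hab : a + b ≤ π)
    (x : ℝ) (h1 : a + x / 2 ∈ Set.Ico η π) (h2 : b - x / 2 ∈ Set.Ico η π) :
    |Real.log (Real.sin (a + x / 2)) - Real.log (Real.sin (b - x / 2))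
        - Real.log (Real.sin a) + Real.log (Real.sin b)|
      ≤ |x| / (2 * Real.sin η ^ 2) := by
  obtain ⟨hη0, hη2⟩ := hη
  have hsη : 0 < Real.sin η := Real.sin_pos_of_pos_of_lt_pi hη0 (by linarith [Real.pi_pos])
  set s : Set ℝ := Set.uIcc (0 : ℝ) x with hs
  set f : ℝ → ℝ := fun t => Real.log (Real.sin (a + t / 2)) - Real.log (Real.sin (b - t / 2))
    with hf
  set f' : ℝ → ℝ := fun t =>
    (Real.sin (a + t / 2))⁻¹ * (Real.cos (a + t / 2) * (1 / 2))
      - (Real.sin (b - t / 2))⁻¹ * (Real.cos (b - t / 2) * -(1 / 2)) with hf'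
  have key : ∀ t ∈ s, η ≤ a + t / 2 ∧ a + t / 2 ≤ π - η ∧ η ≤ b - t / 2 ∧ b - t / 2 ≤ π - η := by
    intro t ht
    rcases Set.mem_uIcc.1 ht with ⟨h0, hx⟩ | ⟨hx, h0⟩ <;>
      exact ⟨by linarith [ha.1, h1.1], by linarith [h2.1, hb.1],
        by linarith [h2.1, hb.1], by linarith [ha.1, h1.1]⟩
  have hsin : ∀ t ∈ s, Real.sin η ≤ Real.sin (a + t / 2) ∧ Real.sin η ≤ Real.sin (b - t / 2) := by
    intro t ht
    obtain ⟨k1, k2, k3, k4⟩ := key t ht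
    exact ⟨sin_eta_le_sin_aux η _ hη0 hη2.le k1 k2, sin_eta_le_sin_aux η _ hη0 hη2.le k3 k4⟩
  have hderiv : ∀ t ∈ s, HasDerivWithinAt f (f' t) s t := by
    intro t ht
    obtain ⟨hu, hv⟩ := hsin t ht
    have hu0 : Real.sin (a + t / 2) ≠ 0 := by linarith
    have hv0 : Real.sin (b - t / 2) ≠ 0 := by linarith
    have d1 : HasDerivAt (fun t : ℝ => a + t / 2) (1 / 2) t := by
      simpa using ((hasDerivAt_id t).div_const 2).const_add a
    have d2 : HasDerivAt (fun t : ℝ => b - t / 2) (-(1 / 2)) t := by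
      simpa using ((hasDerivAt_id t).div_const 2).const_sub b
    have s1 : HasDerivAt (fun t : ℝ => Real.sin (a + t / 2))
        (Real.cos (a + t / 2) * (1 / 2)) t := (Real.hasDerivAt_sin _).comp t d1
    have s2 : HasDerivAt (fun t : ℝ => Real.sin (b - t / 2))
        (Real.cos (b - t / 2) * -(1 / 2)) t := (Real.hasDerivAt_sin _).comp t d2
    have l1 : HasDerivAt (fun t : ℝ => Real.log (Real.sin (a + t / 2)))
        ((Real.sin (a + t / 2))⁻¹ * (Real.cos (a + t / 2) * (1 / 2))) t :=
      by have := (Real.hasDerivAt_log hu0).comp t s1; exact this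
    have l2 : HasDerivAt (fun t : ℝ => Real.log (Real.sin (b - t / 2)))
        ((Real.sin (b - t / 2))⁻¹ * (Real.cos (b - t / 2) * -(1 / 2))) t :=
      by have := (Real.hasDerivAt_log hv0).comp t s2; exact this
    exact (l1.sub l2).hasDerivWithinAt
  have hbound : ∀ t ∈ s, ‖f' t‖ ≤ 1 / (2 * Real.sin η ^ 2) := by
    intro t ht
    obtain ⟨hu, hv⟩ := hsin t ht
    have hu0 : 0 < Real.sin (a + t / 2) := lt_of_lt_of_le hsη hu
    have hv0 : 0 < Real.sin (b - t / 2) := lt_of_lt_of_le hsη hv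
    have alg : ∀ su sv cu cv : ℝ, su ≠ 0 → sv ≠ 0 →
        su⁻¹ * (cu * (1 / 2)) - sv⁻¹ * (cv * -(1 / 2)) = (su * cv + cu * sv) / (2 * (su * sv)) := by
      intro su sv cu cv h1 h2
      field_simp
      ring
    have hval : f' t = Real.sin (a + b) / (2 * (Real.sin (a + t / 2) * Real.sin (b - t / 2))) := by
      rw [hf']
      dsimp only
      rw [alg _ _ _ _ hu0.ne' hv0.ne',
        show a + b = (a + t / 2) + (b - t / 2) by ring, Real.sin_add (a + t / 2) (b - t / 2)]
    have hdpos : (0:ℝ) < 2 * (Real.sin (a + t / 2) * Real.sin (b - t / 2)) :=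
      mul_pos two_pos (mul_pos hu0 hv0)
    rw [hval, Real.norm_eq_abs, abs_div, abs_of_pos hdpos]
    apply div_le_div₀ zero_le_one
      (abs_le.mpr ⟨Real.neg_one_le_sin _, Real.sin_le_one _⟩)
      (by nlinarith)
    nlinarith
  have hmv := Convex.norm_image_sub_le_of_norm_hasDerivWithin_le hderiv hbound
    (convex_uIcc _ _) (Set.left_mem_uIcc) (Set.right_mem_uIcc)
  simp only [hf, Real.norm_eq_abs, sub_zero] at hmv
  calc |Real.log (Real.sin (a + x / 2)) - Real.log (Real.sin (b - x / 2))
        - Real.log (Real.sin a) + Real.log (Real.sin b)|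
      = |(Real.log (Real.sin (a + x / 2)) - Real.log (Real.sin (b - x / 2)))
        - (Real.log (Real.sin (a + 0 / 2)) - Real.log (Real.sin (b - 0 / 2)))| := by
        norm_num
        congr 1
        ring
    _ ≤ 1 / (2 * Real.sin η ^ 2) * |x| := hmv
    _ = |x| / (2 * Real.sin η ^ 2) := by ring
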